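/- Let M ≥ 0 and let ψ : ℂ → ℝ be a continuous function with 0 ≤ ψ(z) ≤ M for all z and ψ(z) = 0 for all z outside the disk D(0,2). Define Φ(z) = ∫_ℂ Γ(ζ) ψ(z - ζ) dζ, where Γ(ζ) = (1/(2π)) log|ζ|. Then Φ(0) ≥ -M/4. -/

import Mathlib

open MeasureTheory Metric Complex Set
open scoped Real

open MeasureTheory Metric Complex Set
open scoped Real

private lemma aux_integral_mul_log : ∫ x in (0:ℝ)..1, x * Real.log x = -(1/4) := by
  have hderiv : ∀ x ∈ Set.Ioo (0:ℝ) 1,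
      HasDerivAt (fun x : ℝ => x / 2 * (x * Real.log x) - x ^ 2 / 4) (x * Real.log x) x := by
    intro x hx
    have h1 : HasDerivAt (fun x : ℝ => x * Real.log x) (Real.log x + 1) x :=
      Real.hasDerivAt_mul_log (ne_of_gt hx.1)
    have h2 : HasDerivAt (fun x : ℝ => x / 2 * (x * Real.log x))
        (1 / 2 * (x * Real.log x) + x / 2 * (Real.log x + 1)) x :=
      ((hasDerivAt_id x).div_const 2).mul h1
    have h3 : HasDerivAt (fun x : ℝ => x ^ 2 / 4) (2 * x ^ 1 / 4) x :=
      (hasDerivAt_pow 2 x).div_const 4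
    have := h2.sub h3
    exact this.congr_deriv (by ring)
  rw [intervalIntegral.integral_eq_sub_of_hasDerivAt_of_le zero_le_one
    (Continuous.continuousOn (by
      exact ((continuous_id.div_const 2).mul Real.continuous_mul_log).sub
        ((continuous_pow 2).div_const 4))) hderiv
    (Real.continuous_mul_log.intervalIntegrable 0 1)]
  norm_num

private lemma aux_H_eq : ∀ r ∈ Set.Ioi (0:ℝ),
    r * min (Real.log r) 0 = (Set.Ioc (0:ℝ) 1).indicator (fun r => r * Real.log r) r := by
  intro r hr
  rcases le_or_gt r 1 with h | h
  · rw [Set.indicator_of_mem (Set.mem_Ioc.2 ⟨hr, h⟩), min_eq_left (Real.log_nonpos (le_of_lt hr) h)]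
  · rw [Set.indicator_of_notMem (fun hm => absurd hm.2 (not_le.2 h)),
      min_eq_right (Real.log_nonneg h.le), mul_zero]

private lemma aux_H_int :
    IntegrableOn (fun r : ℝ => r * min (Real.log r) 0) (Set.Ioi 0) := by
  refine IntegrableOn.congr_fun ?_ (fun r hr => (aux_H_eq r hr).symm) measurableSet_Ioi
  exact ((Real.continuous_mul_log.integrableOn_Ioc).integrable_indicator
    measurableSet_Ioc).integrableOn

private lemma aux_H_val :
    ∫ r in Set.Ioi (0:ℝ), r * min (Real.log r) 0 = -(1/4) := by
  rw [setIntegral_congr_fun measurableSet_Ioi aux_H_eq, integral_indicator measurableSet_Ioc,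
    Measure.restrict_restrict measurableSet_Ioc,
    Set.inter_eq_left.2 (fun x hx => hx.1), ← intervalIntegral.integral_of_le zero_le_one]
  exact aux_integral_mul_log

private lemma aux_integrable_of_polar (f : ℝ × ℝ → ℝ)
    (hf : IntegrableOn (fun p => p.1 • f (polarCoord.symm p)) polarCoord.target) :
    Integrable f := by
  set B : ℝ × ℝ → ℝ × ℝ →L[ℝ] ℝ × ℝ := fun p =>
    LinearMap.toContinuousLinearMap (Matrix.toLin (Module.Basis.finTwoProd ℝ) (Module.Basis.finTwoProd ℝ)
      !![Real.cos p.2, -p.1 * Real.sin p.2; Real.sin p.2, p.1 * Real.cos p.2])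
  have A : ∀ p ∈ polarCoord.target,
      HasFDerivWithinAt polarCoord.symm (B p) polarCoord.target p :=
    fun p _ => (hasFDerivAt_polarCoord_symm p).hasFDerivWithinAt
  have B_det : ∀ p, (B p).det = p.1 := by
    intro p
    conv_rhs => rw [← one_mul p.1, ← Real.cos_sq_add_sin_sq p.2]
    simp only [B, neg_mul, LinearMap.det_toContinuousLinearMap, LinearMap.det_toLin,
      Matrix.det_fin_two_of, sub_neg_eq_add]
    ring
  have h1 : IntegrableOn f polarCoord.source := by
    rw [← polarCoord.symm_image_target_eq_source]
    rw [integrableOn_image_iff_integrableOn_abs_det_fderiv_smul volume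
      polarCoord.open_target.measurableSet A polarCoord.symm.injOn f]
    refine hf.congr_fun (fun p hp => ?_) polarCoord.open_target.measurableSet
    rw [B_det, abs_of_pos hp.1]
  rwa [IntegrableOn, Measure.restrict_congr_set polarCoord_source_ae_eq_univ,
    Measure.restrict_univ] at h1

private lemma aux_integrable_of_polar_complex (f : ℂ → ℝ)
    (hf : IntegrableOn (fun p : ℝ × ℝ => p.1 • f (Complex.polarCoord.symm p))
      polarCoord.target) :
    Integrable f := by
  rw [← (Complex.volume_preserving_equiv_real_prod.symm).integrable_comp_emb
    Complex.measurableEquivRealProd.symm.measurableEmbedding]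
  exact aux_integrable_of_polar _ hf

private lemma aux_prod_int :
    IntegrableOn (fun p : ℝ × ℝ => p.1 * min (Real.log p.1) 0)
      (Set.Ioi (0:ℝ) ×ˢ Set.Ioo (-π) π) := by
  rw [IntegrableOn, Measure.volume_eq_prod, ← Measure.prod_restrict]
  have := aux_H_int.mul_prod (integrable_const (1:ℝ)
    (μ := volume.restrict (Set.Ioo (-π) π)))
  simpa using this

private lemma aux_g0_int :
    Integrable (fun z : ℂ => min (Real.log (‖z‖)) 0) := by
  apply aux_integrable_of_polar_complex
  refine aux_prod_int.congr_fun (fun p hp => ?_) ?_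
  · rw [Complex.norm_polarCoord_symm, abs_of_pos hp.1, smul_eq_mul]
  · exact (isOpen_Ioi.prod isOpen_Ioo).measurableSet

private lemma aux_g0_val :
    ∫ z : ℂ, min (Real.log (‖z‖)) 0 = -(1/4) * (2*π) := by
  rw [← Complex.integral_comp_polarCoord_symm, polarCoord_target]
  rw [setIntegral_congr_fun ((isOpen_Ioi.prod isOpen_Ioo).measurableSet)
    (fun p hp => by
      simp only [Complex.norm_polarCoord_symm, smul_eq_mul, mul_one]
      rw [abs_of_pos hp.1] :
      Set.EqOn (fun p : ℝ × ℝ => p.1 • min (Real.log (‖Complex.polarCoord.symm p‖)) 0)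
        (fun p : ℝ × ℝ => (fun r => r * min (Real.log r) 0) p.1 * (fun _ => (1:ℝ)) p.2)
        (Set.Ioi (0:ℝ) ×ˢ Set.Ioo (-π) π))]
  rw [Measure.volume_eq_prod, setIntegral_prod_mul (fun r => r * min (Real.log r) 0) (fun _ => (1:ℝ)) (Set.Ioi (0:ℝ)) (Set.Ioo (-π) π), aux_H_val]
  simp only [integral_const, Measure.restrict_apply MeasurableSet.univ, Set.univ_inter,
    Real.volume_Ioo, sub_neg_eq_add, smul_eq_mul, mul_one]
  rw [Measure.real, Measure.restrict_apply MeasurableSet.univ, Set.univ_inter, Real.volume_Ioo,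
    ENNReal.toReal_ofReal (by linarith [Real.pi_pos] : (0:ℝ) ≤ π - -π)]
  ring

/-- If `0 ≤ ψ ≤ M` and `ψ` vanishes outside `D(0,2)`, then the convolution
`Φ(z) = ∫ Γ(ζ) ψ(z-ζ) dζ` satisfies `Φ(0) ≥ -M/4`. -/
theorem convolution_fundamental_solution_lower_bound
    (M : ℝ) (hM : 0 ≤ M) (ψ : ℂ → ℝ) (hψc : Continuous ψ)
    (hψ0 : ∀ z, 0 ≤ ψ z) (hψM : ∀ z, ψ z ≤ M)
    (hsupp : ∀ z ∉ Metric.ball (0 : ℂ) 2, ψ z = 0) :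
    -(M / 4) ≤ ∫ ζ, 1 / (2 * Real.pi) * Real.log (‖ζ‖) * ψ (0 - ζ) := by
  by_cases hf : Integrable (fun ζ : ℂ => 1 / (2 * Real.pi) * Real.log (‖ζ‖) * ψ (0 - ζ))
  · have hg_int : Integrable (fun z : ℂ => M * (1 / (2 * π)) * min (Real.log (‖z‖)) 0) :=
      aux_g0_int.const_mul _
    have hle : ∀ z : ℂ, M * (1 / (2 * π)) * min (Real.log (‖z‖)) 0 ≤
        1 / (2 * Real.pi) * Real.log (‖z‖) * ψ (0 - z) := by
      intro z
      rcases le_or_gt 0 (Real.log (‖z‖)) with h | h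
      · rw [min_eq_right h, mul_zero]
        have h2π : (0:ℝ) ≤ 1 / (2 * Real.pi) := by positivity
        exact mul_nonneg (mul_nonneg h2π h) (hψ0 _)
      · rw [min_eq_left h.le]
        have ha : 1 / (2 * Real.pi) * Real.log (‖z‖) ≤ 0 := by
          have h2π : (0:ℝ) < 1 / (2 * Real.pi) := by positivity
          exact mul_nonpos_of_nonneg_of_nonpos h2π.le h.le
        have := mul_le_mul_of_nonpos_left (hψM (0 - z)) ha
        calc M * (1 / (2 * π)) * Real.log (‖z‖)
            = 1 / (2 * Real.pi) * Real.log (‖z‖) * M := by ring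
          _ ≤ _ := this
    have hmono := integral_mono hg_int hf hle
    have hval : ∫ z : ℂ, M * (1 / (2 * π)) * min (Real.log (‖z‖)) 0 = -(M/4) := by
      rw [integral_const_mul, aux_g0_val]
      have : Real.pi ≠ 0 := Real.pi_ne_zero
      field_simp
    rw [hval] at hmono
    exact hmono
  · rw [integral_undef hf]
    linarith
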